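/- Let A ∈ ℝ, let J(z) be the 5×5 matrix with rows (0, 0, 0, 2z₁, 12z₄), (0, 0, 1, 0, 0), (0, −1, 0, 0, −2z₁), (−2z₁, 0, 0, 0, −8z₁z₂ + 2z₅), (−12z₄, 0, 2z₁, 8z₁z₂ − 2z₅, 0), and let F₁(z) = (1/2)A z₁ + (1/6) z₅ + 8A z₂² + (1/2) z₃² + (2/3) z₁ z₂ + (16/3) z₂³. Then for all z ∈ ℝ⁵, J(z)·∇F₁(z) equals the vector field of system (8), namely (2z₄, z₃, −z₁ − 16A z₂ − 16 z₂², −A z₁ + (1/3) z₅ − (8/3) z₁ z₂, −6A z₄ + 2 z₁ z₃ − 8 z₂ z₄). Hence system (8) is the Hamiltonian system ż = J ∇F₁. -/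

import Mathlib

/-- The Poisson matrix of the five-dimensional system (8). Coordinates:
z 0 = z₁, z 1 = z₂, z 2 = z₃, z 3 = z₄, z 4 = z₅. -/
def poissonJ (z : Fin 5 → ℝ) : Matrix (Fin 5) (Fin 5) ℝ :=
  !![0, 0, 0, 2 * z 0, 12 * z 3;
     0, 0, 1, 0, 0;
     0, -1, 0, 0, -2 * z 0;
     -2 * z 0, 0, 0, 0, -8 * z 0 * z 1 + 2 * z 4;
     -12 * z 3, 0, 2 * z 0, 8 * z 0 * z 1 - 2 * z 4, 0]

/-- Gradient of a scalar function on ℝ⁵. -/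
noncomputable def grad5 (F : (Fin 5 → ℝ) → ℝ) (z : Fin 5 → ℝ) : Fin 5 → ℝ :=
  fun i => fderiv ℝ F z (Pi.single i 1)

/-- The Hamiltonian F₁ of the five-dimensional system (8). -/
noncomputable def F₁ (A : ℝ) (z : Fin 5 → ℝ) : ℝ :=
  (1/2) * A * z 0 + (1/6) * z 4 + 8 * A * (z 1)^2 + (1/2) * (z 2)^2
    + (2/3) * z 0 * z 1 + (16/3) * (z 1)^3

noncomputable def Lder (A : ℝ) (z : Fin 5 → ℝ) : (Fin 5 → ℝ) →L[ℝ] ℝ :=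
  ((1/2) * A + (2/3) * z 1) • ContinuousLinearMap.proj 0
  + (16 * A * z 1 + (2/3) * z 0 + 16 * (z 1)^2) • ContinuousLinearMap.proj 1
  + (z 2) • ContinuousLinearMap.proj 2
  + (1/6 : ℝ) • ContinuousLinearMap.proj 4

lemma hasF (A : ℝ) (z : Fin 5 → ℝ) : HasFDerivAt (F₁ A) (Lder A z) z := by
  have h : ∀ i : Fin 5, HasFDerivAt (fun w : Fin 5 → ℝ => w i)
      (ContinuousLinearMap.proj i : (Fin 5 → ℝ) →L[ℝ] ℝ) z := fun i => hasFDerivAt_apply i z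
  have := ((((((h 0).const_mul ((1/2)*A)).add ((h 4).const_mul (1/6))).add
      (((h 1).mul (h 1)).const_mul (8*A))).add (((h 2).mul (h 2)).const_mul (1/2))).add
      ((((h 0).const_mul (2/3)).mul (h 1)))).add ((((h 1).mul (h 1)).mul (h 1)).const_mul (16/3))
  convert this using 1
  any_goals rfl
  · ext w; simp [F₁]; ring
  · ext w
    simp [Lder, ContinuousLinearMap.proj, ContinuousLinearMap.smulRight_apply]
    ring

lemma grad_eq (A : ℝ) (z : Fin 5 → ℝ) :
    grad5 (F₁ A) z = ![(1/2)*A + (2/3)*z 1, 16*A*z 1 + (2/3)*z 0 + 16*(z 1)^2, z 2, 0, 1/6] := by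
  funext i
  have h := (hasF A z).fderiv
  simp only [grad5, h]
  fin_cases i <;>
    simp [Lder, ContinuousLinearMap.proj, Pi.single, Function.update]

/-- System (8) is the Hamiltonian system ż = J ∇F₁. -/
theorem system8_is_hamiltonian (A : ℝ) (z : Fin 5 → ℝ) :
    (poissonJ z).mulVec (grad5 (F₁ A) z) =
      ![2 * z 3,
        z 2,
        -z 0 - 16 * A * z 1 - 16 * (z 1)^2,
        -A * z 0 + (1/3) * z 4 - (8/3) * z 0 * z 1,
        -(6 * A) * z 3 + 2 * z 0 * z 2 - 8 * z 1 * z 3] := by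
  rw [grad_eq]
  funext i
  fin_cases i <;>
    simp [poissonJ, Matrix.mulVec, dotProduct, Fin.sum_univ_five] <;> ring
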